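/- Completeness of the implicit-inexecutability construction: if S, E_a, I_a ⊨_⇝ A → [a]⊥ under dependence-based consequence, then S, I_a, IMPI_a ⊨_K A → [a]⊥ in plain K, where IMPI_a is the set of candidate implicit inexecutability laws (⋀antecedents(Ê) ∧ ¬χ) → [a]⊥ over subsets Ê ⊆ E_a and clauses χ ∈ NewCons(S, ⋀consequents(Ê)) whose literals are all independent of a and whose antecedent is S-consistent. -/

import Mathlib

/-! Classical propositional formulas. -/
inductive PForm (α : Type) : Type
  | atom : α → PForm α
  | fls  : PForm α
  | not  : PForm α → PForm α
  | and  : PForm α → PForm α → PForm α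
  | or   : PForm α → PForm α → PForm α
  | imp  : PForm α → PForm α → PForm α

def PForm.Sat {α : Type} (v : α → Prop) : PForm α → Prop
  | atom p => v p
  | fls => False
  | not φ => ¬ Sat v φ
  | and φ ψ => Sat v φ ∧ Sat v ψ
  | or φ ψ => Sat v φ ∨ Sat v ψ
  | imp φ ψ => Sat v φ → Sat v ψ

/-- Classical (propositional) global consequence. -/
def EntailsCl {α : Type} (Γ : Set (PForm α)) (φ : PForm α) : Prop :=
  ∀ v : α → Prop, (∀ ψ ∈ Γ, PForm.Sat v ψ) → PForm.Sat v φ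

/-- Multimodal formulas with one box per action. -/
inductive MForm (Act α : Type) : Type
  | atom : α → MForm Act α
  | fls  : MForm Act α
  | not  : MForm Act α → MForm Act α
  | and  : MForm Act α → MForm Act α → MForm Act α
  | or   : MForm Act α → MForm Act α → MForm Act α
  | imp  : MForm Act α → MForm Act α → MForm Act α
  | box  : Act → MForm Act α → MForm Act α

def PForm.toM {Act α : Type} : PForm α → MForm Act α
  | .atom p => .atom p
  | .fls => .fls
  | .not φ => .not φ.toM
  | .and φ ψ => .and φ.toM ψ.toM
  | .or φ ψ => .or φ.toM ψ.toM
  | .imp φ ψ => .imp φ.toM ψ.toM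

/-- A Kripke model for multimodal K. -/
structure KModel (Act α : Type) where
  W : Type
  R : Act → W → W → Prop
  V : W → α → Prop

def MForm.Sat {Act α : Type} (M : KModel Act α) : M.W → MForm Act α → Prop
  | w, atom p => M.V w p
  | _, fls => False
  | w, not φ => ¬ Sat M w φ
  | w, and φ ψ => Sat M w φ ∧ Sat M w ψ
  | w, or φ ψ => Sat M w φ ∨ Sat M w ψ
  | w, imp φ ψ => Sat M w φ → Sat M w ψ
  | w, box a φ => ∀ w', M.R a w w' → Sat M w' φ

/-- Global truth in a model. -/
def Glob {Act α : Type} (M : KModel Act α) (Φ : MForm Act α) : Prop :=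
  ∀ w : M.W, MForm.Sat M w Φ

/-- Global consequence in multimodal K. -/
def ConsK {Act α : Type} (Γ : Set (MForm Act α)) (Φ : MForm Act α) : Prop :=
  ∀ M : KModel Act α, (∀ Ψ ∈ Γ, Glob M Ψ) → Glob M Φ

/-- Literals. -/
abbrev Lit (α : Type) := α × Bool

def Lit.Sat {α : Type} (v : α → Prop) (l : Lit α) : Prop :=
  if l.2 then v l.1 else ¬ v l.1

/-- A dependence relation `⇝ ⊆ Act × Lit`. -/
abbrev Dep (Act α : Type) := Act → Lit α → Prop

/-- `⇝`-models: along `R a`, literals independent of `a` persist. -/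
def IsDepModel {Act α : Type} (dep : Dep Act α) (M : KModel Act α) : Prop :=
  ∀ (a : Act) (w w' : M.W), M.R a w w' → ∀ p : α,
    (¬ dep a (p, true) → ¬ M.V w p → ¬ M.V w' p) ∧
    (¬ dep a (p, false) → M.V w p → M.V w' p)

/-- Dependence-based global consequence. -/
def ConsDep {Act α : Type} (dep : Dep Act α) (Γ : Set (MForm Act α)) (Φ : MForm Act α) : Prop :=
  ∀ M : KModel Act α, IsDepModel dep M → (∀ Ψ ∈ Γ, Glob M Ψ) → Glob M Φ

/-- An action theory: static laws `S`, effect laws `E` (antecedent/consequent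
pairs), executability laws `X` (antecedents), inexecutability laws `I`
(antecedents). -/
structure ActionTheory (Act α : Type) where
  S : Set (PForm α)
  E : Act → Set (PForm α × PForm α)
  X : Act → Set (PForm α)
  I : Act → Set (PForm α)

/-- `⟨a⟩Φ`. -/
def MForm.diam {Act α : Type} (a : Act) (Φ : MForm Act α) : MForm Act α :=
  .not (.box a (.not Φ))

/-- Effect law `A → [a]C`. -/
def effLaw {Act α : Type} (a : Act) (e : PForm α × PForm α) : MForm Act α :=
  .imp e.1.toM (.box a e.2.toM)

/-- Executability law `A → ⟨a⟩⊤`. -/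
def exeLaw {Act α : Type} (a : Act) (A : PForm α) : MForm Act α :=
  .imp A.toM (MForm.diam a (.not .fls))

/-- Inexecutability law `A → [a]⊥`. -/
def inexLaw {Act α : Type} (a : Act) (A : PForm α) : MForm Act α :=
  .imp A.toM (.box a .fls)

variable {Act α : Type}

def staticForms (T : ActionTheory Act α) : Set (MForm Act α) := PForm.toM '' T.S
def effForms (T : ActionTheory Act α) (a : Act) : Set (MForm Act α) := effLaw a '' T.E a
def exeForms (T : ActionTheory Act α) (a : Act) : Set (MForm Act α) := exeLaw a '' T.X a
def inexForms (T : ActionTheory Act α) (a : Act) : Set (MForm Act α) := inexLaw a '' T.I a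

/-- The action theory of the single action `a`:  `S ∪ E_a ∪ X_a ∪ I_a`. -/
def formsFor (T : ActionTheory Act α) (a : Act) : Set (MForm Act α) :=
  staticForms T ∪ effForms T a ∪ exeForms T a ∪ inexForms T a

/-- The whole action theory:  `S ∪ E ∪ X ∪ I`. -/
def allForms (T : ActionTheory Act α) : Set (MForm Act α) :=
  staticForms T ∪ (⋃ a, effForms T a) ∪ (⋃ a, exeForms T a) ∪ (⋃ a, inexForms T a)

/-- Postulate PS for action `a`: no implicit static laws. -/
def PS (T : ActionTheory Act α) (dep : Dep Act α) (a : Act) : Prop :=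
  ∀ φ : PForm α, ConsDep dep (formsFor T a) φ.toM → EntailsCl T.S φ

/-- Postulate PS*: no implicit static laws for the whole theory. -/
def PSstar (T : ActionTheory Act α) (dep : Dep Act α) : Prop :=
  ∀ φ : PForm α, ConsDep dep (allForms T) φ.toM → EntailsCl T.S φ

/-- Postulate PI for action `a`: no implicit inexecutability laws. -/
def PIpost (T : ActionTheory Act α) (dep : Dep Act α) (a : Act) : Prop :=
  ∀ A : PForm α, ConsDep dep (formsFor T a) (inexLaw a A) →
    ConsK (staticForms T ∪ inexForms T a) (inexLaw a A)

/-- Postulate PI*: no implicit inexecutability laws for the whole theory. -/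
def PIstar (T : ActionTheory Act α) (dep : Dep Act α) : Prop :=
  ∀ (a : Act) (A : PForm α), ConsDep dep (allForms T) (inexLaw a A) →
    ConsK (staticForms T ∪ ⋃ a', inexForms T a') (inexLaw a A)

/-! Clauses, prime implicates, new consequences. -/

abbrev Clause (α : Type) := Finset (Lit α)

def Clause.Sat {α : Type} (v : α → Prop) (c : Clause α) : Prop :=
  ∃ l ∈ c, Lit.Sat v l

def EntailsC {α : Type} (Γ : Set (PForm α)) (c : Clause α) : Prop :=
  ∀ v : α → Prop, (∀ φ ∈ Γ, PForm.Sat v φ) → Clause.Sat v c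

def ClEntails {α : Type} (c c' : Clause α) : Prop :=
  ∀ v : α → Prop, Clause.Sat v c → Clause.Sat v c'

/-- Prime implicates of (the conjunction of) `Γ`. -/
def PrimImp {α : Type} (Γ : Set (PForm α)) : Set (Clause α) :=
  {c | EntailsC Γ c ∧ ∀ c' : Clause α, EntailsC Γ c' → ClEntails c' c → ClEntails c c'}

/-- `NewCons(Γ, ψ) = PI(Γ ∧ ψ) \ PI(Γ)`. -/
def NewCons {α : Type} (Γ : Set (PForm α)) (ψ : PForm α) : Set (Clause α) :=
  PrimImp (Γ ∪ {ψ}) \ PrimImp Γ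

def Lit.toForm {α : Type} (l : Lit α) : PForm α :=
  if l.2 then .atom l.1 else .not (.atom l.1)

def Lit.neg {α : Type} (l : Lit α) : Lit α := (l.1, !l.2)

noncomputable def Clause.toForm {α : Type} (c : Clause α) : PForm α :=
  c.toList.foldr (fun l φ => (Lit.toForm l).or φ) .fls

/-- Conjunction of a list of formulas. -/
def conjList {α : Type} (L : List (PForm α)) : PForm α :=
  L.foldr .and (.not .fls)

/-- Frame axioms `¬l → [a]¬l` for literals `l` independent of `a`. -/
def FRA {Act α : Type} (dep : Dep Act α) (a : Act) : Set (MForm Act α) :=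
  { Φ | ∃ l : Lit α, ¬ dep a l ∧
        Φ = .imp ((Lit.neg l).toForm.toM) (.box a ((Lit.neg l).toForm.toM)) }

/-- The candidate implicit inexecutability laws
`(⋀antecedents(Ê) ∧ ¬χ) → [a]⊥` for `Ê ⊆ E_a`,
`χ ∈ NewCons(S, ⋀consequents(Ê))` with all literals of `χ` independent of `a`
and `S`-consistent antecedent. -/
def IMPI {Act α : Type} (T : ActionTheory Act α) (dep : Dep Act α) (a : Act) :
    Set (MForm Act α) :=
  { Φ | ∃ (L : List (PForm α × PForm α)) (χ : Clause α),
      (∀ e ∈ L, e ∈ T.E a) ∧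
      χ ∈ NewCons T.S (conjList (L.map Prod.snd)) ∧
      (∀ l ∈ χ, ¬ dep a l) ∧
      (∃ v : α → Prop, (∀ ψ ∈ T.S, PForm.Sat v ψ) ∧
        PForm.Sat v (conjList (L.map Prod.fst)) ∧ ¬ Clause.Sat v χ) ∧
      Φ = inexLaw a (.and (conjList (L.map Prod.fst)) (.not χ.toForm)) }

/-! ### Auxiliary lemmas -/

section MyAux

lemma lit_sat_congr {v v' : α → Prop} (h : ∀ p, v p ↔ v' p) (l : Lit α) :
    Lit.Sat v l ↔ Lit.Sat v' l := by
  rcases l with ⟨p, b⟩; cases b <;> simp [Lit.Sat, h p]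

lemma clause_sat_congr {v v' : α → Prop} (h : ∀ p, v p ↔ v' p) (c : Clause α) :
    Clause.Sat v c ↔ Clause.Sat v' c := by
  unfold Clause.Sat
  exact ⟨fun ⟨l, hl, hs⟩ => ⟨l, hl, (lit_sat_congr h l).mp hs⟩,
         fun ⟨l, hl, hs⟩ => ⟨l, hl, (lit_sat_congr h l).mpr hs⟩⟩

lemma pform_sat_congr {v v' : α → Prop} (h : ∀ p, v p ↔ v' p) (φ : PForm α) :
    PForm.Sat v φ ↔ PForm.Sat v' φ := by
  induction φ <;> simp [PForm.Sat, h, *]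

open Classical in
noncomputable def boolify (v : α → Prop) : α → Bool := fun p => decide (v p)

lemma boolify_iff (v : α → Prop) (p : α) : (boolify v p = true) ↔ v p := by
  simp [boolify]

lemma sat_toM (M : KModel Act α) (w : M.W) (φ : PForm α) :
    MForm.Sat M w (PForm.toM (Act := Act) φ) ↔ PForm.Sat (M.V w) φ := by
  induction φ <;> simp [PForm.toM, MForm.Sat, PForm.Sat, *]

lemma sat_litToForm (v : α → Prop) (l : Lit α) :
    PForm.Sat v l.toForm ↔ Lit.Sat v l := by
  rcases l with ⟨p, b⟩; cases b <;> simp [Lit.toForm, Lit.Sat, PForm.Sat]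

lemma sat_clause_toForm (v : α → Prop) (c : Clause α) :
    PForm.Sat v c.toForm ↔ Clause.Sat v c := by
  have H : ∀ L : List (Lit α),
      PForm.Sat v (L.foldr (fun l φ => (Lit.toForm l).or φ) .fls) ↔ ∃ l ∈ L, Lit.Sat v l := by
    intro L
    induction L with
    | nil => simp [PForm.Sat]
    | cons x L ih => simp [PForm.Sat, sat_litToForm, ih]
  unfold Clause.toForm Clause.Sat
  rw [H]
  simp [Finset.mem_toList]

lemma sat_conjList (v : α → Prop) (L : List (PForm α)) :
    PForm.Sat v (conjList L) ↔ ∀ φ ∈ L, PForm.Sat v φ := by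
  unfold conjList
  induction L with
  | nil => simp [PForm.Sat]
  | cons x L ih => simp [PForm.Sat, ih]

/-- Number of boolean valuations satisfying a clause. -/
noncomputable def mcard {α : Type} (c : Clause α) : ℕ :=
  {b : α → Bool | Clause.Sat (fun p => b p = true) c}.ncard

lemma exists_prime [Fintype α] (Γ : Set (PForm α)) :
    ∀ (c : Clause α), EntailsC Γ c → ∃ χ ∈ PrimImp Γ, ClEntails χ c := by
  classical
  suffices H : ∀ n (c : Clause α), mcard c ≤ n → EntailsC Γ c →
      ∃ χ ∈ PrimImp Γ, ClEntails χ c from fun c hc => H (mcard c) c le_rfl hc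
  have step : ∀ (c : Clause α), c ∉ PrimImp Γ → EntailsC Γ c →
      ∃ c' : Clause α, EntailsC Γ c' ∧ ClEntails c' c ∧ mcard c' < mcard c := by
    intro c hp hc
    have hex : ∃ c' : Clause α, EntailsC Γ c' ∧ ClEntails c' c ∧ ¬ ClEntails c c' := by
      by_contra hno
      push_neg at hno
      exact hp ⟨hc, fun c' h1 h2 => hno c' h1 h2⟩
    obtain ⟨c', h1, h2, h3⟩ := hex
    refine ⟨c', h1, h2, ?_⟩
    have hss : {b : α → Bool | Clause.Sat (fun p => b p = true) c'} ⊂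
        {b : α → Bool | Clause.Sat (fun p => b p = true) c} := by
      constructor
      · intro b hb
        exact h2 _ hb
      · intro hsub
        apply h3
        intro u hu
        have hiff : ∀ p, u p ↔ (boolify u p = true) := fun p => (boolify_iff u p).symm
        have h4 : Clause.Sat (fun p => boolify u p = true) c :=
          (clause_sat_congr hiff c).mp hu
        have h5 := hsub h4
        exact (clause_sat_congr hiff c').mpr h5
    exact Set.ncard_lt_ncard hss (Set.toFinite _)
  intro n
  induction n with
  | zero =>
    intro c hn hc
    by_cases hp : c ∈ PrimImp Γ
    · exact ⟨c, hp, fun u hy => hy⟩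
    · obtain ⟨c', -, -, hlt⟩ := step c hp hc
      omega
  | succ n ih =>
    intro c hn hc
    by_cases hp : c ∈ PrimImp Γ
    · exact ⟨c, hp, fun u hy => hy⟩
    · obtain ⟨c', h1, h2, hlt⟩ := step c hp hc
      obtain ⟨χ, hχ, hce⟩ := ih c' (by omega) h1
      exact ⟨χ, hχ, fun u hu => h2 u (hce u hu)⟩

lemma clentails_subset (c c' : Clause α) (h : ClEntails c c')
    (u0 : α → Prop) (h0 : ¬ Clause.Sat u0 c') : c ⊆ c' := by
  intro l hl
  by_contra hnot
  classical
  obtain ⟨p, b⟩ := l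
  have hcsat : Clause.Sat (fun q => ((q, false) ∈ c') ∨ (q = p ∧ b = true)) c := by
    refine ⟨(p, b), hl, ?_⟩
    cases b
    · have hgoal : Lit.Sat (fun q => ((q, false) ∈ c') ∨ (q = p ∧ (false : Bool) = true))
          (p, false) ↔ ¬ (((p, false) ∈ c') ∨ (p = p ∧ (false : Bool) = true)) := by
        simp only [Lit.Sat]; rfl
      rw [hgoal]
      rintro (hv | ⟨-, hv⟩)
      · exact hnot hv
      · simp at hv
    · exact Or.inr ⟨rfl, rfl⟩
  obtain ⟨⟨q, bq⟩, hm, hsm⟩ := h _ hcsat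
  cases bq
  · -- m = (q, false) ∈ c', so vs q holds via Or.inl, but Lit.Sat vs (q,false) = ¬ vs q
    have : ¬ (((q, false) ∈ c') ∨ (q = p ∧ b = true)) := hsm
    exact this (Or.inl hm)
  · -- m = (q, true) ∈ c' and vs q holds
    have hvsq : ((q, false) ∈ c') ∨ (q = p ∧ b = true) := hsm
    rcases hvsq with hq | ⟨rfl, rfl⟩
    · -- (q,false) ∈ c' and (q,true) ∈ c' : c' is tautological, contradicting h0
      apply h0
      by_cases hu : u0 q
      · exact ⟨(q, true), hm, by simpa [Lit.Sat] using hu⟩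
      · exact ⟨(q, false), hq, by simpa [Lit.Sat] using hu⟩
    · -- l = (q, true) ∈ c', contradiction
      exact hnot hm

end MyAux

/-- Appendix B, Lemma 3: completeness of the
implicit-inexecutability construction. -/
theorem stmt_17 [Fintype α] {Act : Type} (T : ActionTheory Act α) (dep : Dep Act α)
    (a : Act) (A : PForm α)
    (h : ConsDep dep (staticForms T ∪ effForms T a ∪ inexForms T a) (inexLaw a A)) :
    ConsK (staticForms T ∪ inexForms T a ∪ IMPI T dep a) (inexLaw a A) := by
  classical
  intro M hM w
  simp only [inexLaw, MForm.Sat]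
  intro hA w' hR
  set v : α → Prop := M.V w with hv
  have hvA : PForm.Sat v A := (sat_toM M w A).mp hA
  have hSall : ∀ (u : M.W), ∀ ψ ∈ T.S, PForm.Sat (M.V u) ψ := by
    intro u ψ hψ
    exact (sat_toM M u ψ).mp (hM (PForm.toM ψ) (Or.inl (Or.inl ⟨ψ, hψ, rfl⟩)) u)
  by_cases hex : ∃ v'' : α → Prop,
      (∀ ψ ∈ T.S, PForm.Sat v'' ψ) ∧
      (∀ e ∈ T.E a, PForm.Sat v e.1 → PForm.Sat v'' e.2) ∧
      (∀ p : α, (¬ dep a (p, true) → ¬ v p → ¬ v'' p) ∧ (¬ dep a (p, false) → v p → v'' p))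
  · -- build a two-world dependence model and contradict `h`
    obtain ⟨v'', hS'', hE'', hΛ''⟩ := hex
    let N : KModel Act α :=
      ⟨Bool, fun a' x y => a' = a ∧ x = false ∧ y = true, fun x p => cond x (v'' p) (v p)⟩
    have hdep : IsDepModel dep N := by
      intro a' x y hxy p
      obtain ⟨rfl, rfl, rfl⟩ := hxy
      exact hΛ'' p
    have hsatN : ∀ Ψ ∈ staticForms T ∪ effForms T a ∪ inexForms T a, Glob N Ψ := by
      rintro Ψ ((⟨φ, hφ, rfl⟩ | ⟨e, he, rfl⟩) | ⟨B, hB, rfl⟩) u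
      · refine (sat_toM N u φ).mpr ?_
        cases u
        · exact hSall w φ hφ
        · exact hS'' φ hφ
      · simp only [effLaw, MForm.Sat]
        intro hant w2 hR2
        obtain ⟨-, rfl, rfl⟩ := hR2
        exact (sat_toM N true e.2).mpr (hE'' e he ((sat_toM N false e.1).mp hant))
      · simp only [inexLaw, MForm.Sat]
        intro hant w2 hR2
        obtain ⟨-, rfl, rfl⟩ := hR2
        have hMB := hM (inexLaw a B) (Or.inl (Or.inr ⟨B, hB, rfl⟩)) w
        simp only [inexLaw, MForm.Sat] at hMB
        exact hMB ((sat_toM M w B).mpr ((sat_toM N false B).mp hant)) w' hR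
    have hglob := h N hdep hsatN false
    simp only [inexLaw, MForm.Sat] at hglob
    exact hglob ((sat_toM N false A).mpr hvA) true ⟨rfl, rfl, rfl⟩
  · -- no such successor valuation exists: extract an implicit inexecutability law
    have key : ∀ u : α → Prop, (∀ ψ ∈ T.S, PForm.Sat u ψ) →
        (∀ p : α, (¬ dep a (p, true) → ¬ v p → ¬ u p) ∧ (¬ dep a (p, false) → v p → u p)) →
        ∃ e ∈ T.E a, PForm.Sat v e.1 ∧ ¬ PForm.Sat u e.2 := by
      intro u h1 h2
      by_contra hno
      push_neg at hno
      exact hex ⟨u, h1, fun e he hv1 => hno e he hv1, h2⟩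
    set Pb : (α → Bool) → Prop := fun b =>
      (∀ ψ ∈ T.S, PForm.Sat (fun p => b p = true) ψ) ∧
      (∀ p : α, (¬ dep a (p, true) → ¬ v p → ¬ (b p = true)) ∧
        (¬ dep a (p, false) → v p → b p = true)) with hPbdef
    have hch : ∀ b : α → Bool, Pb b → ∃ e ∈ T.E a,
        PForm.Sat v e.1 ∧ ¬ PForm.Sat (fun p => b p = true) e.2 :=
      fun b hb => key _ hb.1 hb.2
    choose ff hf1 hf2 hf3 using hch
    set f' : (α → Bool) → PForm α × PForm α :=
      fun b => if hb : Pb b then ff b hb else (.fls, .fls) with hf'def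
    set s : Finset (α → Bool) := Finset.univ.filter Pb with hsdef
    set L : List (PForm α × PForm α) := s.toList.map f' with hLdef
    have hf' : ∀ b, Pb b → f' b ∈ T.E a ∧ PForm.Sat v (f' b).1 ∧
        ¬ PForm.Sat (fun p => b p = true) (f' b).2 := by
      intro b hb
      simp only [hf'def, dif_pos hb]
      exact ⟨hf1 b hb, hf2 b hb, hf3 b hb⟩
    have hmemL : ∀ e ∈ L, ∃ b, Pb b ∧ f' b = e := by
      intro e he
      obtain ⟨b, hb, rfl⟩ := List.mem_map.mp he
      exact ⟨b, (Finset.mem_filter.mp (Finset.mem_toList.mp hb)).2, rfl⟩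
    have hL1 : ∀ e ∈ L, e ∈ T.E a := by
      intro e he
      obtain ⟨b, hb, rfl⟩ := hmemL e he
      exact (hf' b hb).1
    have hL2 : ∀ e ∈ L, PForm.Sat v e.1 := by
      intro e he
      obtain ⟨b, hb, rfl⟩ := hmemL e he
      exact (hf' b hb).2.1
    set χ₀ : Clause α := Finset.univ.filter (fun l : Lit α => ¬ dep a l ∧ ¬ Lit.Sat v l)
      with hχ₀def
    have hmemχ₀ : ∀ l : Lit α, l ∈ χ₀ ↔ (¬ dep a l ∧ ¬ Lit.Sat v l) := by
      intro l; simp [hχ₀def]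
    have hvχ₀ : ¬ Clause.Sat v χ₀ := fun ⟨l, hl, hs⟩ => ((hmemχ₀ l).mp hl).2 hs
    have hC : ∀ u : α → Prop, (∀ ψ ∈ T.S, PForm.Sat u ψ) →
        (∀ e ∈ L, PForm.Sat u e.2) → Clause.Sat u χ₀ := by
      intro u h1 h2
      by_contra hno
      have hΛu : ∀ p : α, (¬ dep a (p, true) → ¬ v p → ¬ u p) ∧
          (¬ dep a (p, false) → v p → u p) := by
        intro p
        constructor
        · intro hd hvp hup
          exact hno ⟨(p, true), (hmemχ₀ _).mpr ⟨hd, by simpa [Lit.Sat] using hvp⟩,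
            by simpa [Lit.Sat] using hup⟩
        · intro hd hvp
          by_contra hup
          exact hno ⟨(p, false), (hmemχ₀ _).mpr ⟨hd, by simpa [Lit.Sat] using hvp⟩,
            by simpa [Lit.Sat] using hup⟩
      have hiff : ∀ p, u p ↔ (boolify u p = true) := fun p => (boolify_iff u p).symm
      have hPb : Pb (boolify u) := by
        refine ⟨fun ψ hψ => (pform_sat_congr hiff ψ).mp (h1 ψ hψ), fun p => ?_⟩
        exact ⟨fun hd hvp hb => (hΛu p).1 hd hvp ((hiff p).mpr hb),
          fun hd hvp => (hiff p).mp ((hΛu p).2 hd hvp)⟩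
      have hbL : f' (boolify u) ∈ L :=
        List.mem_map.mpr ⟨boolify u,
          Finset.mem_toList.mpr (Finset.mem_filter.mpr ⟨Finset.mem_univ _, hPb⟩), rfl⟩
      exact (hf' _ hPb).2.2 ((pform_sat_congr hiff _).mp (h2 _ hbL))
    have hEnt : EntailsC (T.S ∪ {conjList (L.map Prod.snd)}) χ₀ := by
      intro u hu
      apply hC u (fun ψ hψ => hu ψ (Or.inl hψ))
      intro e he
      have hcj := hu (conjList (L.map Prod.snd)) (Or.inr rfl)
      exact (sat_conjList u _).mp hcj e.2 (List.mem_map.mpr ⟨e, he, rfl⟩)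
    obtain ⟨χ, hχp, hχe⟩ := exists_prime _ χ₀ hEnt
    have hsub : χ ⊆ χ₀ := clentails_subset χ χ₀ hχe v hvχ₀
    have hvχ : ¬ Clause.Sat v χ := fun ⟨l, hl, hs⟩ => ((hmemχ₀ l).mp (hsub hl)).2 hs
    have hnew : χ ∈ NewCons T.S (conjList (L.map Prod.snd)) :=
      ⟨hχp, fun hpr => hvχ (hpr.1 v (hSall w))⟩
    have hdepχ : ∀ l ∈ χ, ¬ dep a l := fun l hl => ((hmemχ₀ l).mp (hsub hl)).1
    have hvant : PForm.Sat v (conjList (L.map Prod.fst)) := by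
      refine (sat_conjList v _).mpr ?_
      intro φ hφ
      obtain ⟨e, heL, rfl⟩ := List.mem_map.mp hφ
      exact hL2 e heL
    have hΦ := hM (inexLaw a (.and (conjList (L.map Prod.fst)) (.not χ.toForm)))
      (Or.inr ⟨L, χ, hL1, hnew, hdepχ, ⟨v, hSall w, hvant, hvχ⟩, rfl⟩) w
    simp only [inexLaw, MForm.Sat] at hΦ
    exact hΦ ⟨(sat_toM M w _).mpr hvant,
      fun hs => hvχ ((sat_clause_toForm v χ).mp ((sat_toM M w _).mp hs))⟩ w' hR
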